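/- The explicit saturation update of the IMPES scheme, s = š + (τ/φ)(Q_in(1 - š) - Q_out š) with φ, τ > 0, Q_in, Q_out ≥ 0, preserves the bounds 0 ≤ s ≤ 1 provided 0 ≤ š ≤ 1 and the CFL-type condition τ max(Q_in, Q_out) ≤ φ holds. -/
import Mathlib


theorem impes_saturation_bounds (φ τ Qin Qout sPrev : ℝ)
    (hφ : 0 < φ) (hτ : 0 < τ) (hin : 0 ≤ Qin) (hout : 0 ≤ Qout)
    (hs0 : 0 ≤ sPrev) (hs1 : sPrev ≤ 1)
    (hcfl_in : τ * Qin ≤ φ) (hcfl_out : τ * Qout ≤ φ) :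
    0 ≤ sPrev + (τ/φ) * (Qin * (1 - sPrev) - Qout * sPrev) ∧
    sPrev + (τ/φ) * (Qin * (1 - sPrev) - Qout * sPrev) ≤ 1 := by
  have hφ' := hφ.ne'
  have h1s : 0 ≤ 1 - sPrev := by linarith
  constructor
  · have h : sPrev + (τ/φ) * (Qin * (1 - sPrev) - Qout * sPrev)
        = (sPrev * (φ - τ * Qout) + τ * Qin * (1 - sPrev)) / φ := by
      field_simp; ring
    rw [h]
    apply div_nonneg _ hφ.le
    have := mul_nonneg (mul_nonneg hτ.le hin) h1s
    nlinarith [mul_nonneg hs0 (sub_nonneg.mpr hcfl_out)]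
  · rw [← sub_nonneg]
    have h : 1 - (sPrev + (τ/φ) * (Qin * (1 - sPrev) - Qout * sPrev))
        = ((1 - sPrev) * (φ - τ * Qin) + τ * Qout * sPrev) / φ := by
      field_simp; ring
    rw [h]
    apply div_nonneg _ hφ.le
    have := mul_nonneg (mul_nonneg hτ.le hout) hs0
    nlinarith [mul_nonneg h1s (sub_nonneg.mpr hcfl_in)]
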